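/- Let 0 < α < β and c > 0. For λ₂ ∈ [0,∞) define the forcing term g_{λ₂}(t) = α λ₂ e^{−β t} / (1 + (c/(2β)) λ₂ (1 − e^{−β t})), and define g_∞(t) = (2αβ/c) e^{−β t} / (1 − e^{−β t}) for t > 0. Let y : (0,∞) → ℝ be differentiable with y(t) ≥ 0 for all t > 0 and y'(t) = −α y(t) − (c/2) y(t)² + g(t) on (0,∞), where g = g_{λ₂} for some λ₂ ∈ [0,∞) or g = g_∞. Then the limit C := lim_{t→∞} e^{α t} y(t) exists and is finite. Moreover there exist constants 0 < m ≤ M < ∞, depending only on α, β and c, such that for every λ₂ ∈ [1,∞) and every such nonnegative solution y (with g = g_{λ₂} or g = g_∞), one has m ≤ lim_{t→∞} e^{α t} y(t) ≤ M. -/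

import Mathlib

open Filter Topology Set Real

/-! ### Auxiliary facts -/

lemma exp_lt_one' {x : ℝ} (h : x < 0) : Real.exp x < 1 := by
  calc Real.exp x < Real.exp 0 := Real.exp_lt_exp.2 h
    _ = 1 := Real.exp_zero

lemma g_nonneg (α β c : ℝ) (hα : 0 < α) (hβ : 0 < β) (hc : 0 < c) (lam t : ℝ) (hlam : 0 ≤ lam)
    (ht : 0 < t) :
    0 ≤ α * lam * Real.exp (-(β * t)) / (1 + c / (2 * β) * lam * (1 - Real.exp (-(β * t)))) := by
  have hE1 : Real.exp (-(β * t)) < 1 := exp_lt_one' (by nlinarith)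
  have hE0 : 0 < Real.exp (-(β * t)) := Real.exp_pos _
  apply div_nonneg
  · positivity
  · have : 0 ≤ c / (2 * β) * lam * (1 - Real.exp (-(β * t))) := by
      apply mul_nonneg (mul_nonneg (by positivity) hlam); linarith
    linarith

lemma g_le_ginf (α β c : ℝ) (hα : 0 < α) (hβ : 0 < β) (hc : 0 < c) (lam t : ℝ) (hlam : 0 ≤ lam)
    (ht : 0 < t) :
    α * lam * Real.exp (-(β * t)) / (1 + c / (2 * β) * lam * (1 - Real.exp (-(β * t))))
      ≤ 2 * α * β / c * Real.exp (-(β * t)) / (1 - Real.exp (-(β * t))) := by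
  have hE1 : Real.exp (-(β * t)) < 1 := exp_lt_one' (by nlinarith)
  have hE0 : 0 < Real.exp (-(β * t)) := Real.exp_pos _
  set E := Real.exp (-(β * t)) with hEdef
  have hden : 0 < 1 + c / (2 * β) * lam * (1 - E) := by
    have : 0 ≤ c / (2 * β) * lam * (1 - E) := by
      apply mul_nonneg (mul_nonneg (by positivity) hlam); linarith
    linarith
  rw [div_le_div_iff₀ hden (by linarith)]
  have hAb : 2 * α * β / c * (c / (2 * β)) = α := by field_simp
  have heq := congrArg (· * (lam * E * (1 - E))) hAb
  have hA : (0:ℝ) < 2 * α * β / c := by positivity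
  nlinarith [heq, mul_pos hA hE0]

lemma ginf_le (α β c : ℝ) (hα : 0 < α) (hβ : 0 < β) (hc : 0 < c) (t : ℝ) (ht : 1 ≤ t) :
    2 * α * β / c * Real.exp (-(β * t)) / (1 - Real.exp (-(β * t)))
      ≤ 2 * α * β / c / (1 - Real.exp (-β)) * Real.exp (-(β * t)) := by
  have ht0 : (0:ℝ) < t := by linarith
  have hE1 : Real.exp (-(β * t)) < 1 := exp_lt_one' (by nlinarith)
  have hE0 : 0 < Real.exp (-(β * t)) := Real.exp_pos _
  have hEβ : Real.exp (-(β * t)) ≤ Real.exp (-β) := Real.exp_le_exp.2 (by nlinarith)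
  have hβ1 : Real.exp (-β) < 1 := exp_lt_one' (by linarith)
  have h2 : 2 * α * β / c / (1 - Real.exp (-β)) * Real.exp (-(β * t))
      = 2 * α * β / c * Real.exp (-(β * t)) / (1 - Real.exp (-β)) := by ring
  rw [h2]
  apply div_le_div_of_nonneg_left (by positivity) (by linarith) (by linarith)

lemma g_low (α β c : ℝ) (hα : 0 < α) (hβ : 0 < β) (hc : 0 < c) (lam t : ℝ) (hlam : 1 ≤ lam)
    (ht : 0 < t) :
    α / (1 + c / (2 * β)) * Real.exp (-(β * t))
      ≤ α * lam * Real.exp (-(β * t)) / (1 + c / (2 * β) * lam * (1 - Real.exp (-(β * t)))) := by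
  have hE1 : Real.exp (-(β * t)) < 1 := exp_lt_one' (by nlinarith)
  have hE0 : 0 < Real.exp (-(β * t)) := Real.exp_pos _
  set E := Real.exp (-(β * t)) with hEdef
  have hb : 0 < c / (2 * β) := by positivity
  have hden : 0 < 1 + c / (2 * β) * lam * (1 - E) := by
    have : 0 ≤ c / (2 * β) * lam * (1 - E) := by
      apply mul_nonneg (mul_nonneg hb.le (by linarith)); linarith
    linarith
  rw [show α / (1 + c / (2 * β)) * E = α * E / (1 + c / (2 * β)) from by ring,
    div_le_div_iff₀ (by linarith) hden]
  have h1 : c / (2 * β) * lam * (1 - E) ≤ c / (2 * β) * lam :=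
    by nlinarith [mul_pos hb (by linarith : (0:ℝ) < lam)]
  nlinarith [mul_pos hα hE0, mul_pos hb (by linarith : (0:ℝ) < lam),
    mul_pos (mul_pos hα hE0) hb]

lemma ginf_low (α β c : ℝ) (hα : 0 < α) (hβ : 0 < β) (hc : 0 < c) (t : ℝ) (ht : 0 < t) :
    α / (1 + c / (2 * β)) * Real.exp (-(β * t))
      ≤ 2 * α * β / c * Real.exp (-(β * t)) / (1 - Real.exp (-(β * t))) := by
  have hE1 : Real.exp (-(β * t)) < 1 := exp_lt_one' (by nlinarith)
  have hE0 : 0 < Real.exp (-(β * t)) := Real.exp_pos _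
  set E := Real.exp (-(β * t)) with hEdef
  have hb : 0 < c / (2 * β) := by positivity
  have hAb : 2 * α * β / c * (c / (2 * β)) = α := by field_simp
  rw [show α / (1 + c / (2 * β)) * E = α * E / (1 + c / (2 * β)) from by ring,
    div_le_div_iff₀ (by linarith) (by linarith)]
  have hA : 0 < 2 * α * β / c := by positivity
  nlinarith [mul_pos hα hE0, mul_pos hA hE0, mul_pos (mul_pos hA hE0) hb,
    mul_nonneg (mul_nonneg hα.le hE0.le) hE0.le]

/-! ### The derivative of `z t = e^{αt} y t` -/

lemma z_deriv (α c : ℝ) (g y : ℝ → ℝ)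
    (hy' : ∀ t > (0:ℝ), HasDerivAt y (-(α * y t) - c / 2 * y t ^ 2 + g t) t)
    (t : ℝ) (ht : 0 < t) :
    HasDerivAt (fun s => Real.exp (α * s) * y s)
      (Real.exp (α * t) * (g t - c / 2 * y t ^ 2)) t := by
  have h1 : HasDerivAt (fun s : ℝ => Real.exp (α * s)) (Real.exp (α * t) * (α * 1)) t :=
    ((hasDerivAt_id t).const_mul α).exp
  have h2 := h1.mul (hy' t ht)
  exact h2.congr_deriv (by ring)

/-! ### Uniform upper bound for `y` -/

lemma riccati_upper (α c G : ℝ) (hα : 0 < α) (hc : 0 < c) (hG : 0 ≤ G)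
    (g : ℝ → ℝ) (hgG : ∀ s : ℝ, 1 ≤ s → g s ≤ G)
    (y : ℝ → ℝ) (hy0 : ∀ t > (0:ℝ), 0 ≤ y t)
    (hy' : ∀ t > (0:ℝ), HasDerivAt y (-(α * y t) - c / 2 * y t ^ 2 + g t) t)
    (t : ℝ) (ht : 2 ≤ t) : y t ≤ 2 * G / c + 1 + 4 / c := by
  set t₀ := t - 1 with ht₀def
  clear_value t₀
  have ht₀ : 1 ≤ t₀ := by rw [ht₀def]; linarith
  have hcont : ContinuousOn y (Icc t₀ t) := fun s hs =>
    ((hy' s (by have := hs.1; linarith)).continuousAt).continuousWithinAt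
  obtain ⟨sm, hsm, hmax⟩ := isCompact_Icc.exists_isMaxOn ⟨t₀, by constructor <;> linarith⟩ hcont
  set Y := max (y sm) 0 with hYdef
  have hY0 : 0 ≤ Y := le_max_right _ _
  have hYb : ∀ s ∈ Icc t₀ t, y s ≤ Y := fun s hs => (hmax hs).trans (le_max_left _ _)
  set ε : ℝ := min (1/2) (4 / (c * (Y + 1))) with hεdef
  have hε : 0 < ε := lt_min (by norm_num) (by positivity)
  have hε1 : ε ≤ 1/2 := min_le_left _ _
  have hε2 : ε * (c * (Y + 1)) ≤ 4 := (le_div_iff₀ (by positivity)).1 (min_le_right _ _)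
  clear_value ε
  set K : ℝ := 2 * G / c + 1 with hKdef
  clear_value K
  have hK1 : 1 ≤ K := by
    have : 0 ≤ 2 * G / c := by positivity
    rw [hKdef]; linarith
  set a' : ℝ := t₀ + ε with ha'def
  clear_value a'
  have ha't : a' ≤ t := by rw [ha'def, ht₀def]; linarith
  set B : ℝ → ℝ := fun s => K + 4 / c * (s - t₀)⁻¹ with hBdef
  set B' : ℝ → ℝ := fun s => 4 / c * (-1 / (s - t₀) ^ 2) with hB'def
  clear_value B B'
  have hBderiv : ∀ x ∈ Ico a' t, HasDerivWithinAt B (B' x) (Ici x) x := by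
    intro x hx
    have hxa : a' ≤ x := hx.1
    have hxu : 0 < x - t₀ := by rw [ha'def] at hxa; linarith
    have h1 : HasDerivAt (fun s : ℝ => s - t₀) 1 x := (hasDerivAt_id x).sub_const t₀
    have h2 := (h1.inv (ne_of_gt hxu)).const_mul (4/c)
    rw [hBdef, hB'def]
    exact (h2.const_add K).hasDerivWithinAt
  have hyderiv : ∀ x ∈ Ico a' t, HasDerivWithinAt y
      (-(α * y x) - c / 2 * y x ^ 2 + g x) (Ici x) x := by
    intro x hx
    have hxa : a' ≤ x := hx.1
    have hx0 : 0 < x := by rw [ha'def] at hxa; linarith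
    exact (hy' x hx0).hasDerivWithinAt
  have hBcont : ContinuousOn B (Icc a' t) := by
    intro s hs
    have hsa : a' ≤ s := hs.1
    have hsu : 0 < s - t₀ := by rw [ha'def] at hsa; linarith
    rw [hBdef]
    exact continuousWithinAt_const.add (continuousWithinAt_const.mul
      ((continuousWithinAt_id.sub continuousWithinAt_const).inv₀ (ne_of_gt hsu)))
  have hstart : y a' ≤ B a' := by
    have h1 : y a' ≤ Y := hYb a' ⟨by rw [ha'def]; linarith, ha't⟩
    have h4 : Y + 1 ≤ 4 / c * ε⁻¹ := by
      have he : (4:ℝ) / c * ε⁻¹ = 4 / (c * ε) := by field_simp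
      rw [he, le_div_iff₀ (by positivity)]
      nlinarith
    have hBa : B a' = K + 4 / c * ε⁻¹ := by rw [hBdef, ha'def]; simp
    rw [hBa]; linarith
  have hbound : ∀ x ∈ Ico a' t, y x = B x →
      -(α * y x) - c / 2 * y x ^ 2 + g x < B' x := by
    intro x hx hcontact
    have hxa : a' ≤ x := hx.1
    have hx1 : 1 ≤ x := by rw [ha'def] at hxa; linarith
    have hx0 : 0 < x := by linarith
    have hu : 0 < x - t₀ := by rw [ha'def] at hxa; linarith
    set u := x - t₀ with hudef
    clear_value u
    set v := 4 / c * u⁻¹ with hvdef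
    have hv : 0 < v := by positivity
    clear_value v
    have hyx : y x = K + v := by
      rw [hcontact, hBdef]; show K + 4 / c * (x - t₀)⁻¹ = K + v
      rw [hvdef, hudef]
    have hgx : g x ≤ G := hgG x hx1
    have hKG : G ≤ c / 2 * K ^ 2 := by
      have hKc : c / 2 * K ^ 2 = (2 * G + c)^2 / (2 * c) := by
        rw [hKdef]; field_simp
      rw [hKc, le_div_iff₀ (by positivity)]
      nlinarith [sq_nonneg G, sq_nonneg c, mul_nonneg hG hc.le]
    have hv2 : c / 2 * v ^ 2 = 8 / (c * u ^ 2) := by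
      rw [hvdef]; field_simp; ring
    have hBx : B' x = -(4 / (c * u ^ 2)) := by
      rw [hB'def]; show 4 / c * (-1 / (x - t₀) ^ 2) = _
      rw [← hudef]; field_simp
    have h48 : 4 / (c * u ^ 2) < 8 / (c * u ^ 2) := by
      have hd : 0 < c * u ^ 2 := by positivity
      rw [div_lt_div_iff₀ hd hd]; nlinarith
    have hexp : c / 2 * (K + v) ^ 2 = c / 2 * K ^ 2 + c * K * v + c / 2 * v ^ 2 := by ring
    have hKv : 0 ≤ c * K * v := by positivity
    have hαKv : 0 ≤ α * (K + v) := by positivity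
    rw [hBx, hyx]
    linarith
  have key := image_le_of_deriv_right_lt_deriv_boundary' (a := a') (b := t)
    (f := y) (f' := fun x => -(α * y x) - c / 2 * y x ^ 2 + g x) (B := B) (B' := B')
    (hcont.mono (Icc_subset_Icc (by rw [ha'def]; linarith) le_rfl))
    hyderiv hstart hBcont hBderiv hbound (x := t) ⟨ha't, le_refl t⟩
  have hBt : B t = K + 4 / c * 1 := by
    rw [hBdef]; simp [ht₀def]
  rw [hBt, hKdef] at key
  linarith

/-! ### Upper bound for `z` -/

lemma z_upper (α β c G₁ : ℝ) (g y : ℝ → ℝ) (hα : 0 < α) (hαβ : α < β) (hc : 0 < c)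
    (hG₁ : 0 ≤ G₁)
    (hgup : ∀ s : ℝ, 1 ≤ s → g s ≤ G₁ * Real.exp (-(β * s)))
    (hy' : ∀ t > (0:ℝ), HasDerivAt y (-(α * y t) - c / 2 * y t ^ 2 + g t) t)
    (t : ℝ) (ht : 2 ≤ t) :
    Real.exp (α * t) * y t ≤ Real.exp (α * 2) * y 2 + G₁ / (β - α) := by
  have hβα : 0 < β - α := by linarith
  set z : ℝ → ℝ := fun s => Real.exp (α * s) * y s with hzdef
  set B : ℝ → ℝ := fun s =>
    (z 2 + G₁ / (β - α) * Real.exp ((α - β) * 2)) - G₁ / (β - α) * Real.exp ((α - β) * s)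
    with hBdef
  have hBderiv : ∀ x : ℝ, HasDerivAt B (G₁ * Real.exp ((α - β) * x)) x := by
    intro x
    have hE : HasDerivAt (fun s : ℝ => Real.exp ((α - β) * s))
        (Real.exp ((α - β) * x) * ((α - β) * 1)) x := ((hasDerivAt_id x).const_mul (α - β)).exp
    have h2 := (hE.const_mul (G₁ / (β - α))).const_sub
      (z 2 + G₁ / (β - α) * Real.exp ((α - β) * 2))
    exact h2.congr_deriv (by field_simp; ring)
  have hzderiv : ∀ x ∈ Ico (2:ℝ) t, HasDerivWithinAt z
      (Real.exp (α * x) * (g x - c / 2 * y x ^ 2)) (Ici x) x := fun x hx =>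
    (z_deriv α c g y hy' x (by have := hx.1; linarith)).hasDerivWithinAt
  have hzcont : ContinuousOn z (Icc 2 t) := fun s hs =>
    ((z_deriv α c g y hy' s (by have := hs.1; linarith)).continuousAt).continuousWithinAt
  have hbound : ∀ x ∈ Ico (2:ℝ) t,
      Real.exp (α * x) * (g x - c / 2 * y x ^ 2) ≤ G₁ * Real.exp ((α - β) * x) := by
    intro x hx
    have hx1 : (1:ℝ) ≤ x := by have := hx.1; linarith
    have hgx := hgup x hx1
    have hy2 : 0 ≤ c / 2 * y x ^ 2 := by positivity
    have heq : Real.exp (α * x) * Real.exp (-(β * x)) = Real.exp ((α - β) * x) := by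
      rw [← Real.exp_add]; ring_nf
    calc Real.exp (α * x) * (g x - c / 2 * y x ^ 2)
        ≤ Real.exp (α * x) * g x := by nlinarith [Real.exp_pos (α * x)]
      _ ≤ Real.exp (α * x) * (G₁ * Real.exp (-(β * x))) := by
          nlinarith [Real.exp_pos (α * x)]
      _ = G₁ * Real.exp ((α - β) * x) := by rw [← heq]; ring
  have hstart : z 2 ≤ B 2 := by rw [hBdef]; simp
  have key := image_le_of_deriv_right_le_deriv_boundary (a := (2:ℝ)) (b := t)
    (f := z) (f' := fun x => Real.exp (α * x) * (g x - c / 2 * y x ^ 2))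
    (B := B) (B' := fun x => G₁ * Real.exp ((α - β) * x))
    hzcont hzderiv hstart (fun s _ => (hBderiv s).continuousAt.continuousWithinAt)
    (fun x _ => (hBderiv x).hasDerivWithinAt) hbound (x := t) ⟨ht, le_refl t⟩
  have h1 : Real.exp ((α - β) * 2) ≤ 1 := Real.exp_le_one_iff.2 (by nlinarith)
  have h2 : 0 < Real.exp ((α - β) * t) := Real.exp_pos _
  have h3 : 0 ≤ G₁ / (β - α) := by positivity
  have hBt : B t = (z 2 + G₁ / (β - α) * Real.exp ((α - β) * 2))
      - G₁ / (β - α) * Real.exp ((α - β) * t) := by rw [hBdef]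
  rw [hBt] at key
  have : z t ≤ z 2 + G₁ / (β - α) := by nlinarith
  exact this

/-! ### Convergence of `z` -/

lemma z_tendsto (α c B₁ : ℝ) (g y : ℝ → ℝ) (hα : 0 < α) (hc : 0 < c) (hB₁ : 0 ≤ B₁)
    (hg0 : ∀ t > (0:ℝ), 0 ≤ g t) (hy0 : ∀ t > (0:ℝ), 0 ≤ y t)
    (hy' : ∀ t > (0:ℝ), HasDerivAt y (-(α * y t) - c / 2 * y t ^ 2 + g t) t)
    (hzb : ∀ t : ℝ, 2 ≤ t → Real.exp (α * t) * y t ≤ B₁) :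
    ∃ C : ℝ, Tendsto (fun t : ℝ => Real.exp (α * t) * y t) atTop (𝓝 C) := by
  set k : ℝ := c * B₁ ^ 2 / (2 * α) with hkdef
  have hk0 : 0 ≤ k := by positivity
  have hkα : k * α = c / 2 * B₁ ^ 2 := by rw [hkdef]; field_simp
  set v : ℝ → ℝ := fun s => Real.exp (α * s) * y s - k * Real.exp (-α * s) with hvdef
  have hvderiv : ∀ x : ℝ, 0 < x → HasDerivAt v
      (Real.exp (α * x) * (g x - c / 2 * y x ^ 2) + k * α * Real.exp (-α * x)) x := by
    intro x hx
    have h1 := z_deriv α c g y hy' x hx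
    have h2 : HasDerivAt (fun s : ℝ => Real.exp (-α * s)) (Real.exp (-α * x) * (-α * 1)) x :=
      ((hasDerivAt_id x).const_mul (-α)).exp
    have h3 := h1.sub (h2.const_mul k)
    exact h3.congr_deriv (by ring)
  have hmono : MonotoneOn v (Ici (2:ℝ)) := by
    apply monotoneOn_of_deriv_nonneg (convex_Ici 2)
    · exact fun s hs =>
        ((hvderiv s (by have : (2:ℝ) ≤ s := hs; linarith)).continuousAt).continuousWithinAt
    · intro x hx
      rw [interior_Ici] at hx
      have hx0 : (0:ℝ) < x := by have : (2:ℝ) < x := hx; linarith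
      exact ((hvderiv x hx0).differentiableAt).differentiableWithinAt
    · intro x hx
      rw [interior_Ici] at hx
      have hx2 : (2:ℝ) < x := hx
      have hx0 : 0 < x := by linarith
      rw [(hvderiv x hx0).deriv]
      have hgx : 0 ≤ g x := hg0 x hx0
      have hz0 : 0 ≤ Real.exp (α * x) * y x := mul_nonneg (Real.exp_pos _).le (hy0 x hx0)
      have hzB : Real.exp (α * x) * y x ≤ B₁ := hzb x hx2.le
      have hsq : (Real.exp (α * x) * y x) ^ 2 ≤ B₁ ^ 2 := by nlinarith
      have hkey : Real.exp (α * x) * (c / 2 * y x ^ 2)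
          = c / 2 * Real.exp (-α * x) * (Real.exp (α * x) * y x) ^ 2 := by
        have h1 : Real.exp (-α * x) = (Real.exp (α * x))⁻¹ := by
          rw [neg_mul, Real.exp_neg]
        rw [h1]
        field_simp
      have hb2 : Real.exp (α * x) * (c / 2 * y x ^ 2)
          ≤ c / 2 * Real.exp (-α * x) * B₁ ^ 2 := by
        rw [hkey]
        apply mul_le_mul_of_nonneg_left hsq (by positivity)
      have hfin : Real.exp (α * x) * (g x - c / 2 * y x ^ 2)
          = Real.exp (α * x) * g x - Real.exp (α * x) * (c / 2 * y x ^ 2) := by ring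
      have hke : k * α * Real.exp (-α * x) = c / 2 * Real.exp (-α * x) * B₁ ^ 2 := by
        rw [hkα]; ring
      rw [hfin, hke]
      have := mul_nonneg (Real.exp_pos (α * x)).le hgx
      linarith
  set V : ℝ → ℝ := fun t => v (max t 2) with hVdef
  have hVmono : Monotone V := fun s t hst =>
    hmono (mem_Ici.2 (le_max_right _ _)) (mem_Ici.2 (le_max_right _ _)) (max_le_max hst le_rfl)
  have hVbdd : BddAbove (Set.range V) := by
    refine ⟨B₁, ?_⟩
    rintro _ ⟨t, rfl⟩
    have h1 : Real.exp (α * max t 2) * y (max t 2) ≤ B₁ := hzb _ (le_max_right _ _)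
    have h2 : 0 ≤ k * Real.exp (-α * max t 2) := mul_nonneg hk0 (Real.exp_pos _).le
    show v (max t 2) ≤ B₁
    rw [hvdef]
    simp only []
    linarith
  have hlimV := tendsto_atTop_ciSup hVmono hVbdd
  have hveq : V =ᶠ[atTop] v := by
    filter_upwards [eventually_ge_atTop (2:ℝ)] with t ht
    rw [hVdef]
    simp only [max_eq_left ht]
  have hlimv : Tendsto v atTop (𝓝 (⨆ i, V i)) := hlimV.congr' hveq
  have h1 : Tendsto (fun t : ℝ => -α * t) atTop atBot := by
    apply Filter.tendsto_atTop_atBot.mpr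
    intro b
    refine ⟨-b / α, fun a ha => ?_⟩
    rw [div_le_iff₀ hα] at ha
    nlinarith
  have htail : Tendsto (fun t : ℝ => k * Real.exp (-α * t)) atTop (𝓝 0) := by
    have h2 := (Real.tendsto_exp_atBot.comp h1).const_mul k
    simpa using h2
  refine ⟨(⨆ i, V i) + 0, ?_⟩
  have hsum := hlimv.add htail
  have heq : (fun t : ℝ => Real.exp (α * t) * y t) = fun t => v t + k * Real.exp (-α * t) := by
    funext t
    rw [hvdef]
    ring
  rw [heq]
  exact hsum

/-! ### Lower bound at `t = 3` -/

lemma y3_lower (α β c : ℝ) (g y : ℝ → ℝ) (a U : ℝ) (hα : 0 < α) (hβ : 0 < β) (hc : 0 < c)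
    (ha : 0 < a) (hU : 0 < U)
    (hglow : ∀ t > (0:ℝ), a * Real.exp (-(β * t)) ≤ g t)
    (hy0 : ∀ t > (0:ℝ), 0 ≤ y t)
    (hy' : ∀ t > (0:ℝ), HasDerivAt y (-(α * y t) - c / 2 * y t ^ 2 + g t) t)
    (hyU : ∀ t : ℝ, 2 ≤ t → y t ≤ U) :
    min (min 1 (a * Real.exp (-(3 * β)) / 2 / (α + c / 2))) (a * Real.exp (-(3 * β)) / 2)
      * Real.exp (-(α + c / 2 * U)) ≤ y 3 := by
  set r : ℝ := a * Real.exp (-(3 * β)) / 2 with hrdef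
  have hr : 0 < r := by positivity
  set ε : ℝ := min 1 (r / (α + c / 2)) with hεdef
  have hε : 0 < ε := lt_min one_pos (by positivity)
  have hε1 : ε ≤ 1 := min_le_left _ _
  have hεr : ε * (α + c / 2) ≤ r := (le_div_iff₀ (by positivity)).1 (min_le_right _ _)
  set δ₀ : ℝ := min ε r with hδ₀def
  have hδ₀ : 0 < δ₀ := lt_min hε hr
  set L : ℝ := α + c / 2 * U with hLdef
  have hL : 0 < L := by positivity
  clear_value r ε δ₀ L
  have hex : ∃ s ∈ Icc (2:ℝ) 3, δ₀ ≤ y s := by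
    by_contra h
    push_neg at h
    have hsm : ∀ s ∈ Icc (2:ℝ) 3, y s < δ₀ := h
    have hmono : MonotoneOn (fun s => y s - r * s) (Icc (2:ℝ) 3) := by
      apply monotoneOn_of_deriv_nonneg (convex_Icc 2 3)
      · exact fun s hs => (((hy' s (by have := hs.1; linarith)).continuousAt).sub
          (continuousAt_const.mul continuousAt_id)).continuousWithinAt
      · intro x hx
        rw [interior_Icc] at hx
        exact (((hy' x (by have := hx.1; linarith)).sub
          ((hasDerivAt_id x).const_mul r)).differentiableAt).differentiableWithinAt
      · intro x hx
        rw [interior_Icc] at hx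
        have hx0 : (0:ℝ) < x := by have := hx.1; linarith
        have hd : HasDerivAt (fun s => y s - r * s)
            (-(α * y x) - c / 2 * y x ^ 2 + g x - r) x := by
          exact ((hy' x hx0).sub ((hasDerivAt_id x).const_mul r)).congr_deriv (by ring)
        rw [hd.deriv]
        have hyx : y x < δ₀ := hsm x ⟨hx.1.le, hx.2.le⟩
        have hyx0 : 0 ≤ y x := hy0 x hx0
        have hyε : y x < ε := lt_of_lt_of_le hyx (hδ₀def ▸ min_le_left ε r)
        have hgx : a * Real.exp (-(β * x)) ≤ g x := hglow x hx0
        have hgx2 : 2 * r ≤ a * Real.exp (-(β * x)) := by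
          rw [hrdef]
          have : Real.exp (-(3 * β)) ≤ Real.exp (-(β * x)) := by
            apply Real.exp_le_exp.2; nlinarith [hx.2]
          nlinarith
        have hsq : y x ^ 2 ≤ y x := by nlinarith
        nlinarith
    have h32 := hmono ⟨le_refl 2, by norm_num⟩ ⟨by norm_num, le_refl 3⟩ (by norm_num)
    have hy20 : 0 ≤ y 2 := hy0 2 (by norm_num)
    have hy3 : y 3 < δ₀ := hsm 3 ⟨by norm_num, le_refl 3⟩
    have hδ₀r : δ₀ ≤ r := hδ₀def ▸ min_le_right ε r
    simp only [] at h32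
    linarith
  obtain ⟨s₀, hs₀, hys₀⟩ := hex
  have hmono2 : MonotoneOn (fun s => Real.exp (L * s) * y s) (Icc (2:ℝ) 3) := by
    apply monotoneOn_of_deriv_nonneg (convex_Icc 2 3)
    · intro s hs
      have hs0 : (0:ℝ) < s := by have := hs.1; linarith
      exact ((Real.continuous_exp.comp (continuous_const.mul continuous_id)).continuousAt.mul
        (hy' s hs0).continuousAt).continuousWithinAt
    · intro x hx
      rw [interior_Icc] at hx
      have hx0 : (0:ℝ) < x := by have := hx.1; linarith
      have hE : HasDerivAt (fun s : ℝ => Real.exp (L * s)) (Real.exp (L * x) * (L * 1)) x :=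
        ((hasDerivAt_id x).const_mul L).exp
      exact ((hE.mul (hy' x hx0)).differentiableAt).differentiableWithinAt
    · intro x hx
      rw [interior_Icc] at hx
      have hx0 : (0:ℝ) < x := by have := hx.1; linarith
      have hE : HasDerivAt (fun s : ℝ => Real.exp (L * s)) (Real.exp (L * x) * (L * 1)) x :=
        ((hasDerivAt_id x).const_mul L).exp
      rw [HasDerivAt.deriv (f := fun s => Real.exp (L * s) * y s) (hE.mul (hy' x hx0))]
      have hyx0 : 0 ≤ y x := hy0 x hx0
      have hyxU : y x ≤ U := hyU x hx.1.le
      have hgx : 0 < g x :=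
        lt_of_lt_of_le (by positivity) (hglow x hx0)
      have hsq : c / 2 * y x ^ 2 ≤ c / 2 * U * y x := by
        nlinarith [mul_nonneg (mul_nonneg (by linarith : (0:ℝ) ≤ c/2) (sub_nonneg.2 hyxU)) hyx0]
      have hepos : (0:ℝ) < Real.exp (L * x) := Real.exp_pos _
      have : 0 ≤ L * y x + (-(α * y x) - c / 2 * y x ^ 2 + g x) := by
        rw [hLdef] at *
        nlinarith
      nlinarith
  have hp := hmono2 hs₀ ⟨by norm_num, le_refl 3⟩ hs₀.2
  simp only [] at hp
  have h1 : Real.exp (L * 2) * δ₀ ≤ Real.exp (L * s₀) * y s₀ := by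
    apply mul_le_mul (Real.exp_le_exp.2 (by nlinarith [hs₀.1])) hys₀ hδ₀.le (Real.exp_pos _).le
  have h2 : Real.exp (L * 2) * δ₀ ≤ Real.exp (L * 3) * y 3 := le_trans h1 hp
  have h3 : Real.exp (L * 2) * δ₀ * (Real.exp (L * 3))⁻¹ = δ₀ * Real.exp (-L) := by
    rw [← Real.exp_neg]
    rw [show Real.exp (L * 2) * δ₀ * Real.exp (-(L * 3))
        = δ₀ * (Real.exp (L * 2) * Real.exp (-(L * 3))) from by ring, ← Real.exp_add]
    congr 1
    congr 1
    ring
  have h4 : δ₀ * Real.exp (-L) ≤ y 3 := by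
    rw [← h3]
    rw [mul_inv_le_iff₀ (Real.exp_pos _)]
    linarith [h2]
  exact h4

/-! ### Lower bound for `z` on `[3, ∞)` -/

lemma z_lower (α β c : ℝ) (g y : ℝ → ℝ) (a zc : ℝ) (hα : 0 < α) (hβ : 0 < β) (hc : 0 < c)
    (ha : 0 < a) (hzc : 0 < zc)
    (hglow : ∀ t > (0:ℝ), a * Real.exp (-(β * t)) ≤ g t)
    (hy' : ∀ t > (0:ℝ), HasDerivAt y (-(α * y t) - c / 2 * y t ^ 2 + g t) t)
    (hz3 : zc ≤ Real.exp (α * 3) * y 3)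
    (T : ℝ) (hT : 3 ≤ T) :
    (zc⁻¹ + c / (2 * α))⁻¹ ≤ Real.exp (α * T) * y T := by
  set D : ℝ → ℝ := fun s => zc⁻¹ + c / (2 * α) * (Real.exp (-α * 3) - Real.exp (-α * s))
    with hDdef
  have hDpos : ∀ s : ℝ, 3 ≤ s → 0 < D s := by
    intro s hs
    have h1 : Real.exp (-α * s) ≤ Real.exp (-α * 3) := Real.exp_le_exp.2 (by nlinarith)
    have : 0 ≤ c / (2 * α) * (Real.exp (-α * 3) - Real.exp (-α * s)) := by
      apply mul_nonneg (by positivity); linarith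
    have h2 : 0 < zc⁻¹ := by positivity
    rw [hDdef]; simp only []; linarith
  have hDle : ∀ s : ℝ, 3 ≤ s → D s ≤ zc⁻¹ + c / (2 * α) := by
    intro s hs
    have h1 : Real.exp (-α * 3) ≤ 1 := Real.exp_le_one_iff.2 (by nlinarith)
    have h2 : 0 < Real.exp (-α * s) := Real.exp_pos _
    have h3 : Real.exp (-α * 3) - Real.exp (-α * s) ≤ 1 := by linarith
    have h4 : c / (2 * α) * (Real.exp (-α * 3) - Real.exp (-α * s)) ≤ c / (2 * α) * 1 :=
      mul_le_mul_of_nonneg_left h3 (by positivity)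
    rw [hDdef]; simp only []; linarith
  have hDderiv : ∀ x : ℝ, HasDerivAt D (c / 2 * Real.exp (-α * x)) x := by
    intro x
    have hE : HasDerivAt (fun s : ℝ => Real.exp (-α * s)) (Real.exp (-α * x) * (-α * 1)) x :=
      ((hasDerivAt_id x).const_mul (-α)).exp
    have h1 := ((hE.const_sub (Real.exp (-α * 3))).const_mul (c / (2 * α))).const_add zc⁻¹
    exact h1.congr_deriv (by field_simp)
  set u : ℝ → ℝ := fun s => (D s)⁻¹ with hudef
  have huderiv : ∀ x ∈ Ico (3:ℝ) T, HasDerivWithinAt u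
      (-(c / 2 * Real.exp (-α * x)) / (D x) ^ 2) (Ici x) x := fun x hx =>
    ((hDderiv x).inv (ne_of_gt (hDpos x hx.1))).hasDerivWithinAt
  have hucont : ContinuousOn u (Icc (3:ℝ) T) := fun s hs =>
    (((hDderiv s).continuousAt).inv₀ (ne_of_gt (hDpos s hs.1))).continuousWithinAt
  have hzcont : ContinuousOn (fun s => Real.exp (α * s) * y s) (Icc (3:ℝ) T) := fun s hs =>
    ((z_deriv α c g y hy' s (by have := hs.1; linarith)).continuousAt).continuousWithinAt
  have hzderiv : ∀ x ∈ Ico (3:ℝ) T, HasDerivWithinAt (fun s => Real.exp (α * s) * y s)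
      (Real.exp (α * x) * (g x - c / 2 * y x ^ 2)) (Ici x) x := fun x hx =>
    (z_deriv α c g y hy' x (by have := hx.1; linarith)).hasDerivWithinAt
  have hstart : u 3 ≤ Real.exp (α * 3) * y 3 := by
    have hD3 : D 3 = zc⁻¹ := by rw [hDdef]; simp
    rw [hudef]; simp only []; rw [hD3, inv_inv]
    exact hz3
  have hbound : ∀ x ∈ Ico (3:ℝ) T, u x = Real.exp (α * x) * y x →
      -(c / 2 * Real.exp (-α * x)) / (D x) ^ 2 < Real.exp (α * x) * (g x - c / 2 * y x ^ 2) := by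
    intro x hx hcontact
    have hx0 : (0:ℝ) < x := by have := hx.1; linarith
    have hgx : 0 < g x := lt_of_lt_of_le (by positivity) (hglow x hx0)
    have hDx : 0 < D x := hDpos x hx.1
    have hux : (D x)⁻¹ = Real.exp (α * x) * y x := hcontact
    have hlhs : -(c / 2 * Real.exp (-α * x)) / (D x) ^ 2
        = -(c / 2 * Real.exp (-α * x) * (Real.exp (α * x) * y x) ^ 2) := by
      rw [div_eq_mul_inv, ← inv_pow, hux]
      ring
    have hkey : c / 2 * Real.exp (-α * x) * (Real.exp (α * x) * y x) ^ 2
        = Real.exp (α * x) * (c / 2 * y x ^ 2) := by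
      rw [neg_mul, Real.exp_neg]
      field_simp
    have hsplit : Real.exp (α * x) * (g x - c / 2 * y x ^ 2)
        = Real.exp (α * x) * g x - Real.exp (α * x) * (c / 2 * y x ^ 2) := by ring
    have hpos := mul_pos (Real.exp_pos (α * x)) hgx
    rw [hlhs, hsplit, hkey]
    linarith
  have key := image_le_of_deriv_right_lt_deriv_boundary' (a := (3:ℝ)) (b := T)
    (f := u) (f' := fun x => -(c / 2 * Real.exp (-α * x)) / (D x) ^ 2)
    (B := fun s => Real.exp (α * s) * y s)
    (B' := fun x => Real.exp (α * x) * (g x - c / 2 * y x ^ 2))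
    hucont huderiv hstart hzcont hzderiv hbound (x := T) ⟨hT, le_refl T⟩
  have hm : (zc⁻¹ + c / (2 * α))⁻¹ ≤ u T := by
    rw [hudef]
    exact inv_anti₀ (hDpos T hT) (hDle T hT)
  exact hm.trans key

/-! ### Constants -/

noncomputable def Gone (α β c : ℝ) : ℝ := 2 * α * β / c / (1 - Real.exp (-β))
noncomputable def Uc (α β c : ℝ) : ℝ := 2 * (Gone α β c * Real.exp (-β)) / c + 1 + 4 / c
noncomputable def Bc (α β c : ℝ) : ℝ := Real.exp (α * 2) * Uc α β c + Gone α β c / (β - α)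
noncomputable def ac (α β c : ℝ) : ℝ := α / (1 + c / (2 * β))
noncomputable def dc (α β c : ℝ) : ℝ :=
  min (min 1 (ac α β c * Real.exp (-(3 * β)) / 2 / (α + c / 2)))
    (ac α β c * Real.exp (-(3 * β)) / 2) * Real.exp (-(α + c / 2 * Uc α β c))
noncomputable def mc (α β c : ℝ) : ℝ := ((Real.exp (α * 3) * dc α β c)⁻¹ + c / (2 * α))⁻¹

/-! ### Main intermediate lemmas -/

lemma main_ex (α β c : ℝ) (hα : 0 < α) (hαβ : α < β) (hc : 0 < c) (g y : ℝ → ℝ)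
    (hg0 : ∀ t > (0:ℝ), 0 ≤ g t)
    (hgup : ∀ s : ℝ, 1 ≤ s → g s ≤ Gone α β c * Real.exp (-(β * s)))
    (hy0 : ∀ t > (0:ℝ), 0 ≤ y t)
    (hy' : ∀ t > (0:ℝ), HasDerivAt y (-(α * y t) - c / 2 * y t ^ 2 + g t) t) :
    (∀ t : ℝ, 2 ≤ t → y t ≤ Uc α β c) ∧
    (∀ t : ℝ, 2 ≤ t → Real.exp (α * t) * y t ≤ Bc α β c) ∧
    (∃ C : ℝ, Tendsto (fun t : ℝ => Real.exp (α * t) * y t) atTop (𝓝 C)) := by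
  have hβ : 0 < β := hα.trans hαβ
  have hG₁ : 0 < Gone α β c := by
    rw [Gone]
    have := exp_lt_one' (show -β < 0 by linarith)
    apply div_pos (by positivity)
    linarith
  have hgG : ∀ s : ℝ, 1 ≤ s → g s ≤ Gone α β c * Real.exp (-β) := fun s hs =>
    (hgup s hs).trans (mul_le_mul_of_nonneg_left (Real.exp_le_exp.2 (by nlinarith)) hG₁.le)
  have hGe : 0 ≤ Gone α β c * Real.exp (-β) := by positivity
  have hyU : ∀ t : ℝ, 2 ≤ t → y t ≤ Uc α β c := by
    intro t ht
    rw [Uc]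
    exact riccati_upper α c _ hα hc hGe g hgG y hy0 hy' t ht
  have hzb : ∀ t : ℝ, 2 ≤ t → Real.exp (α * t) * y t ≤ Bc α β c := by
    intro t ht
    have h1 := z_upper α β c (Gone α β c) g y hα hαβ hc hG₁.le hgup hy' t ht
    have h2 : Real.exp (α * 2) * y 2 ≤ Real.exp (α * 2) * Uc α β c :=
      mul_le_mul_of_nonneg_left (hyU 2 le_rfl) (Real.exp_pos _).le
    rw [Bc]; linarith
  have hB0 : 0 ≤ Bc α β c :=
    le_trans (mul_nonneg (Real.exp_pos _).le (hy0 2 (by norm_num))) (hzb 2 le_rfl)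
  exact ⟨hyU, hzb, z_tendsto α c (Bc α β c) g y hα hc hB0 hg0 hy0 hy' hzb⟩

lemma main_bdd (α β c : ℝ) (hα : 0 < α) (hαβ : α < β) (hc : 0 < c) (g y : ℝ → ℝ)
    (hg0 : ∀ t > (0:ℝ), 0 ≤ g t)
    (hgup : ∀ s : ℝ, 1 ≤ s → g s ≤ Gone α β c * Real.exp (-(β * s)))
    (hglow : ∀ t > (0:ℝ), ac α β c * Real.exp (-(β * t)) ≤ g t)
    (hy0 : ∀ t > (0:ℝ), 0 ≤ y t)
    (hy' : ∀ t > (0:ℝ), HasDerivAt y (-(α * y t) - c / 2 * y t ^ 2 + g t) t) :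
    ∀ t : ℝ, 3 ≤ t → mc α β c ≤ Real.exp (α * t) * y t ∧
      Real.exp (α * t) * y t ≤ Bc α β c := by
  have hβ : 0 < β := hα.trans hαβ
  obtain ⟨hyU, hzb, -⟩ := main_ex α β c hα hαβ hc g y hg0 hgup hy0 hy'
  have ha : 0 < ac α β c := by rw [ac]; positivity
  have hG₁ : 0 < Gone α β c := by
    rw [Gone]
    have := exp_lt_one' (show -β < 0 by linarith)
    apply div_pos (by positivity)
    linarith
  have hUpos : 0 < Uc α β c := by
    have h1 : 0 ≤ Gone α β c * Real.exp (-β) := by positivity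
    have h2 : 0 ≤ 2 * (Gone α β c * Real.exp (-β)) / c := div_nonneg (by linarith) hc.le
    have h3 : 0 < 4 / c := by positivity
    rw [Uc]; linarith
  have hδ : 0 < dc α β c := by
    rw [dc]
    have h1 : 0 < ac α β c * Real.exp (-(3 * β)) / 2 / (α + c / 2) := by positivity
    have h2 : 0 < ac α β c * Real.exp (-(3 * β)) / 2 := by positivity
    exact mul_pos (lt_min (lt_min one_pos h1) h2) (Real.exp_pos _)
  have hy3 : dc α β c ≤ y 3 := by
    rw [dc]
    exact y3_lower α β c g y (ac α β c) (Uc α β c) hα hβ hc ha hUpos hglow hy0 hy' hyU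
  have hz3 : Real.exp (α * 3) * dc α β c ≤ Real.exp (α * 3) * y 3 :=
    mul_le_mul_of_nonneg_left hy3 (Real.exp_pos _).le
  have hzlow := z_lower α β c g y (ac α β c) (Real.exp (α * 3) * dc α β c) hα hβ hc ha
    (mul_pos (Real.exp_pos _) hδ) hglow hy' hz3
  intro t ht
  refine ⟨?_, hzb t (by linarith)⟩
  rw [mc]
  exact hzlow t ht



/-- (Lemma 4.7 of the paper.) For the Riccati equation
`y' = −α y − (c/2) y² + g(t)` on `(0,∞)` with forcing `g = g_{λ₂}` or `g = g_∞`
(the formal limit as `λ₂ → ∞`), every nonnegative solution satisfies that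
`C = lim_{t→∞} e^{αt} y(t)` exists; moreover there are constants `0 < m ≤ M < ∞`
(depending only on `α, β, c`) bounding this limit uniformly over `λ₂ ∈ [1,∞]` and
over all nonnegative solutions. -/
theorem stmt18 (α β c : ℝ) (hα : 0 < α) (hαβ : α < β) (hc : 0 < c)
    (g_ : ℝ → ℝ → ℝ)
    (hg : ∀ lam₂ t, g_ lam₂ t =
      α * lam₂ * Real.exp (-(β * t)) /
        (1 + c / (2 * β) * lam₂ * (1 - Real.exp (-(β * t)))))
    (ginf : ℝ → ℝ)
    (hginf : ∀ t, ginf t =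
      2 * α * β / c * Real.exp (-(β * t)) / (1 - Real.exp (-(β * t)))) :
    -- existence of the limit for every admissible forcing and nonnegative solution
    (∀ g : ℝ → ℝ, ((∃ lam₂ ≥ (0 : ℝ), g = g_ lam₂) ∨ g = ginf) →
      ∀ y : ℝ → ℝ, (∀ t > (0 : ℝ), 0 ≤ y t) →
        (∀ t > (0 : ℝ), HasDerivAt y (-(α * y t) - c / 2 * y t ^ 2 + g t) t) →
        ∃ C : ℝ, Tendsto (fun t : ℝ => Real.exp (α * t) * y t) atTop (𝓝 C)) ∧
    -- uniform positive lower and finite upper bounds for `λ₂ ∈ [1,∞]`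
    (∃ m M : ℝ, 0 < m ∧ m ≤ M ∧
      ∀ g : ℝ → ℝ, ((∃ lam₂ ≥ (1 : ℝ), g = g_ lam₂) ∨ g = ginf) →
        ∀ y : ℝ → ℝ, (∀ t > (0 : ℝ), 0 ≤ y t) →
          (∀ t > (0 : ℝ), HasDerivAt y (-(α * y t) - c / 2 * y t ^ 2 + g t) t) →
          ∀ C : ℝ, Tendsto (fun t : ℝ => Real.exp (α * t) * y t) atTop (𝓝 C) →
            m ≤ C ∧ C ≤ M) := by
  have hβ : 0 < β := hα.trans hαβ
  -- bounds on the forcing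
  have hup : ∀ g : ℝ → ℝ, ((∃ lam₂ ≥ (0 : ℝ), g = g_ lam₂) ∨ g = ginf) →
      (∀ t > (0:ℝ), 0 ≤ g t) ∧
      (∀ s : ℝ, 1 ≤ s → g s ≤ Gone α β c * Real.exp (-(β * s))) := by
    intro g hadm
    rcases hadm with ⟨lam, hlam, rfl⟩ | rfl
    · constructor
      · intro t ht
        rw [hg]
        exact g_nonneg α β c hα hβ hc lam t hlam ht
      · intro s hs
        rw [hg, Gone]
        exact (g_le_ginf α β c hα hβ hc lam s hlam (by linarith)).trans
          (ginf_le α β c hα hβ hc s hs)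
    · constructor
      · intro t ht
        rw [hginf]
        have hE1 : Real.exp (-(β * t)) < 1 := exp_lt_one' (by nlinarith)
        exact div_nonneg (by positivity) (by linarith)
      · intro s hs
        rw [hginf, Gone]
        exact ginf_le α β c hα hβ hc s hs
  have hlow : ∀ g : ℝ → ℝ, ((∃ lam₂ ≥ (1 : ℝ), g = g_ lam₂) ∨ g = ginf) →
      ∀ t > (0:ℝ), ac α β c * Real.exp (-(β * t)) ≤ g t := by
    intro g hadm t ht
    rcases hadm with ⟨lam, hlam, rfl⟩ | rfl
    · rw [hg, ac]
      exact g_low α β c hα hβ hc lam t hlam ht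
    · rw [hginf, ac]
      exact ginf_low α β c hα hβ hc t ht
  constructor
  · intro g hadm y hy0 hy'
    obtain ⟨hg0, hgup⟩ := hup g hadm
    exact (main_ex α β c hα hαβ hc g y hg0 hgup hy0 hy').2.2
  · refine ⟨mc α β c, max (Bc α β c) (mc α β c), ?_, le_max_right _ _, ?_⟩
    · -- positivity of mc
      have ha : 0 < ac α β c := by rw [ac]; positivity
      have hG₁ : 0 < Gone α β c := by
        rw [Gone]
        have := exp_lt_one' (show -β < 0 by linarith)
        apply div_pos (by positivity)
        linarith
      have hUpos : 0 < Uc α β c := by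
        have h1 : 0 ≤ Gone α β c * Real.exp (-β) := by positivity
        have h2 : 0 ≤ 2 * (Gone α β c * Real.exp (-β)) / c := div_nonneg (by linarith) hc.le
        have h3 : 0 < 4 / c := by positivity
        rw [Uc]; linarith
      have hδ : 0 < dc α β c := by
        rw [dc]
        have h1 : 0 < ac α β c * Real.exp (-(3 * β)) / 2 / (α + c / 2) := by positivity
        have h2 : 0 < ac α β c * Real.exp (-(3 * β)) / 2 := by positivity
        exact mul_pos (lt_min (lt_min one_pos h1) h2) (Real.exp_pos _)
      rw [mc]
      have h1 : 0 < Real.exp (α * 3) * dc α β c := mul_pos (Real.exp_pos _) hδ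
      have h2 : 0 < (Real.exp (α * 3) * dc α β c)⁻¹ := by positivity
      have h3 : 0 < c / (2 * α) := by positivity
      positivity
    · intro g hadm y hy0 hy' C hC
      have hadm' : (∃ lam₂ ≥ (0 : ℝ), g = g_ lam₂) ∨ g = ginf := by
        rcases hadm with ⟨lam, hlam, rfl⟩ | rfl
        · exact Or.inl ⟨lam, by linarith, rfl⟩
        · exact Or.inr rfl
      obtain ⟨hg0, hgup⟩ := hup g hadm'
      have hglow := hlow g hadm
      have hbd := main_bdd α β c hα hαβ hc g y hg0 hgup hglow hy0 hy'
      constructor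
      · exact ge_of_tendsto hC (eventually_atTop.2 ⟨3, fun t ht => (hbd t ht).1⟩)
      · exact le_of_tendsto hC (eventually_atTop.2
          ⟨3, fun t ht => le_trans (hbd t ht).2 (le_max_left _ _)⟩)
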